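/- There exists an instance with 3 agents and 9 singly-copied items, with utilities given by Borda-like scores (agents 1 and 2 value item o_k at 10−k for k=1..9; agent 3 values o_1 at 6, o_2 at 9, o_3 at 8, o_4 at 7, and o_k at 10−k for k=5..9), such that no allocation of all items maximizing the sum of utilities is EF1. -/

import Mathlib

open Finset

/-- Utilities of the 3 agents over 9 items: agents 1,2 value item `o_k` at `10-k`;
agent 3 values the items at `6,9,8,7,5,4,3,2,1`. -/
noncomputable def u4 : Fin 3 → Fin 9 → ℝ :=
  ![fun k => 9 - (k.val : ℝ), fun k => 9 - (k.val : ℝ), ![6, 9, 8, 7, 5, 4, 3, 2, 1]]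

/-- The bundle of agent `i` under allocation `p` (each item to exactly one agent). -/
def bundle4 (p : Fin 9 → Fin 3) (i : Fin 3) : Finset (Fin 9) :=
  Finset.univ.filter (fun o => p o = i)

/-- Utilitarian welfare of an allocation. -/
noncomputable def welf4 (p : Fin 9 → Fin 3) : ℝ := ∑ o, u4 (p o) o

/-- EF1: for all agents `i, j`, removing at most one item from `j`'s bundle eliminates
`i`'s envy towards `j`. -/
def EF1_4 (p : Fin 9 → Fin 3) : Prop :=
  ∀ i j : Fin 3, ∃ O' ⊆ bundle4 p j, O'.card ≤ 1 ∧
    ∑ o ∈ bundle4 p j \ O', u4 i o ≤ ∑ o ∈ bundle4 p i, u4 i o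

noncomputable def m4 : Fin 9 → ℝ := ![9, 9, 8, 7, 5, 4, 3, 2, 1]
lemma u4_nonneg : ∀ i o, 0 ≤ u4 i o := by
  intro i o; fin_cases i <;> fin_cases o <;> norm_num [u4]
lemma u4_le : ∀ i o, u4 i o ≤ m4 o := by
  intro i o; fin_cases i <;> fin_cases o <;> norm_num [u4, m4]
lemma hub (p : Fin 9 → Fin 3) : welf4 p ≤ 48 := by
  have : welf4 p ≤ ∑ o, m4 o := Finset.sum_le_sum (fun o _ => u4_le (p o) o)
  calc welf4 p ≤ ∑ o, m4 o := this
    _ = 48 := by simp [Fin.sum_univ_succ, m4]; norm_num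
lemma hpt (p : Fin 9 → Fin 3) (h : welf4 p = 48) : ∀ o, u4 (p o) o = m4 o := by
  have hz : ∑ o, (m4 o - u4 (p o) o) = 0 := by
    rw [Finset.sum_sub_distrib]
    have : ∑ o, m4 o = 48 := by simp [Fin.sum_univ_succ, m4]; norm_num
    rw [this, ← welf4, h]; ring
  intro o
  have := (Finset.sum_eq_zero_iff_of_nonneg (fun o _ => by linarith [u4_le (p o) o])).mp hz o (Finset.mem_univ o)
  linarith

lemma fv1 : ((1:Fin 9).val) = 1 := rfl
lemma fv2 : ((2:Fin 9).val) = 2 := rfl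
lemma fv3 : ((3:Fin 9).val) = 3 := rfl
lemma m4_2 : m4 2 = 8 := rfl
lemma m4_3 : m4 3 = 7 := rfl
lemma fin3_cases (a : Fin 3) : a = 0 ∨ a = 1 ∨ a = 2 := by omega

-- key envy lemma: removing one item from {1,2,3} leaves value ≥ 13 for agents 0,1
lemma key (i : Fin 3) (hi : i = 0 ∨ i = 1) (O' : Finset (Fin 9)) (hc : O'.card ≤ 1) :
    13 ≤ ∑ o ∈ ({1, 2, 3} : Finset (Fin 9)) \ O', u4 i o := by
  have hiv : ∀ o : Fin 9, u4 i o = 9 - (o.val : ℝ) := by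
    rcases hi with h | h <;> subst h <;> exact fun o => rfl
  have hO : ({1, 2, 3} : Finset (Fin 9)) \ O' = ({1,2,3} : Finset (Fin 9)) \ (O' ∩ {1,2,3}) := by
    ext o; simp
  rw [hO, Finset.sum_sdiff_eq_sub (Finset.inter_subset_right)]
  have h123 : ∑ o ∈ ({1,2,3} : Finset (Fin 9)), u4 i o = 21 := by
    simp [hiv, fv1, fv2, fv3]; norm_num
  have hsmall : ∑ o ∈ O' ∩ {1,2,3}, u4 i o ≤ 8 := by
    calc ∑ o ∈ O' ∩ {1,2,3}, u4 i o ≤ ∑ _o ∈ O' ∩ {1,2,3}, (8:ℝ) := by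
          apply Finset.sum_le_sum
          intro o ho
          have ho2 : o ∈ ({1,2,3} : Finset (Fin 9)) := (Finset.mem_inter.mp ho).2
          rw [hiv]
          fin_cases ho2 <;> norm_num [fv1, fv2, fv3]
      _ = (O' ∩ {1,2,3}).card * 8 := by rw [Finset.sum_const, nsmul_eq_mul]
      _ ≤ 1 * 8 := by
          have : (O' ∩ {1,2,3}).card ≤ 1 := le_trans (Finset.card_le_card Finset.inter_subset_left) hc
          exact_mod_cast mul_le_mul_of_nonneg_right (by exact_mod_cast this) (by norm_num)
      _ = 8 := by norm_num
  linarith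


/-- In this instance no utilitarian-maximal allocation is EF1. -/
theorem stmt4 :
    ∀ p : Fin 9 → Fin 3, (∀ q : Fin 9 → Fin 3, welf4 q ≤ welf4 p) → ¬ EF1_4 p := by
  intro p hmax hEF
  have hq0 : welf4 (![0, 2, 2, 2, 0, 0, 0, 0, 0] : Fin 9 → Fin 3) = 48 := by
    simp [welf4, Fin.sum_univ_succ, u4]; norm_num
  have hp48 : welf4 p = 48 := le_antisymm (hub p) (hq0 ▸ hmax _)
  have hpt := hpt p hp48
  -- assignments forced
  have h1 : p 1 = 2 := by
    rcases fin3_cases (p 1) with h | h | h <;> [skip; skip; exact h] <;>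
      · have := hpt 1; rw [h] at this; norm_num [u4, m4, fv1, fv2, fv3] at this
  have h2 : p 2 = 2 := by
    rcases fin3_cases (p 2) with h | h | h <;> [skip; skip; exact h] <;>
      · have := hpt 2; rw [h] at this; norm_num [u4, m4_2, fv1, fv2, fv3] at this
  have h3 : p 3 = 2 := by
    rcases fin3_cases (p 3) with h | h | h <;> [skip; skip; exact h] <;>
      · have := hpt 3; rw [h] at this; norm_num [u4, m4_3, fv1, fv2, fv3] at this
  -- the sum of the values (w.r.t. u4 0) of bundles 0,1 is ≤ 24
  have hfib : ∑ i : Fin 3, ∑ o ∈ bundle4 p i, u4 0 o = ∑ o, u4 0 o := by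
    exact Finset.sum_fiberwise _ _ _
  have htot : ∑ o, u4 0 o = 45 := by simp [Fin.sum_univ_succ, u4]; norm_num
  have hsub123 : ({1,2,3} : Finset (Fin 9)) ⊆ bundle4 p 2 := by
    intro o ho
    fin_cases ho <;> simp [bundle4, h1, h2, h3]
  have hB2 : (21:ℝ) ≤ ∑ o ∈ bundle4 p 2, u4 0 o := by
    have := Finset.sum_le_sum_of_subset_of_nonneg hsub123 (fun o _ _ => u4_nonneg 0 o)
    have h123 : ∑ o ∈ ({1,2,3} : Finset (Fin 9)), u4 0 o = 21 := by
      simp [u4, fv1, fv2, fv3]; norm_num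
    linarith
  rw [Fin.sum_univ_three, htot] at hfib
  have hu01 : ∀ o, u4 1 o = u4 0 o := fun o => rfl
  have hv : (∑ o ∈ bundle4 p 0, u4 0 o) ≤ 12 ∨ (∑ o ∈ bundle4 p 1, u4 1 o) ≤ 12 := by
    simp only [hu01]
    by_contra hcon
    push_neg at hcon
    linarith [hcon.1, hcon.2]
  -- pick the poorer agent i
  obtain ⟨i, hi01, hvi⟩ : ∃ i : Fin 3, (i = 0 ∨ i = 1) ∧ (∑ o ∈ bundle4 p i, u4 i o) ≤ 12 := by
    rcases hv with h | h
    · exact ⟨0, Or.inl rfl, h⟩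
    · exact ⟨1, Or.inr rfl, h⟩
  obtain ⟨O', hOsub, hOcard, hOle⟩ := hEF i 2
  have hk := key i hi01 O' hOcard
  have hmono : ∑ o ∈ ({1,2,3} : Finset (Fin 9)) \ O', u4 i o ≤ ∑ o ∈ bundle4 p 2 \ O', u4 i o := by
    apply Finset.sum_le_sum_of_subset_of_nonneg
    · exact Finset.sdiff_subset_sdiff hsub123 (le_refl _)
    · exact fun o _ _ => u4_nonneg i o
  linarith
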